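/- Let G be an α-caterpillar with non-degree-one vertices w_1,…,w_ℓ forming a path. The assignment obtained by filling the stars in order w_1, w_2, … with agents from T1 (first the central vertex, then its degree-one neighbors) until T1 is exhausted and placing the agents of T2 on all remaining vertices is a swap-equilibrium, and it remains a swap-equilibrium after deleting any subset of edges of G. -/
import Mathlib

open SimpleGraph

variable {V : Type*}

/-- Utility of the agent occupying vertex `v` in graph `H` under type assignment `τ`:
the fraction of same-type agents among occupied neighbors (0 if no neighbors). -/
noncomputable def utility (H : SimpleGraph V) (τ : V → Bool) (v : V) : ℚ := by
  classical
  exact if H.neighborSet v = ∅ then 0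
    else ((H.neighborSet v ∩ {w | τ w = τ v}).ncard : ℚ) / ((H.neighborSet v).ncard : ℚ)

/-- The type function after the agents on vertices `i` and `j` exchange their vertices. -/
noncomputable def swapAt (τ : V → Bool) (i j : V) : V → Bool := fun v => by
  classical
  exact if v = i then τ j else if v = j then τ i else τ v

/-- The swap of the (distinct-type) agents on `i` and `j` strictly increases both utilities. -/
def ProfitableSwap (H : SimpleGraph V) (τ : V → Bool) (i j : V) : Prop :=
  τ i ≠ τ j ∧
  utility H τ i < utility H (swapAt τ i j) j ∧
  utility H τ j < utility H (swapAt τ i j) i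

/-- Swap-equilibrium: no profitable swap exists. -/
def IsSwapEq (H : SimpleGraph V) (τ : V → Bool) : Prop :=
  ∀ i j : V, ¬ ProfitableSwap H τ i j

/-- Degree of a vertex (number of neighbors). -/
noncomputable def ndeg (H : SimpleGraph V) (v : V) : ℕ := (H.neighborSet v).ncard

lemma utility_nonneg (H : SimpleGraph V) (τ : V → Bool) (v : V) : 0 ≤ utility H τ v := by
  unfold utility
  split <;> positivity

lemma utility_le_one [Fintype V] (H : SimpleGraph V) (τ : V → Bool) (v : V) :
    utility H τ v ≤ 1 := by
  unfold utility
  split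
  · norm_num
  · apply div_le_one_of_le₀
    · exact_mod_cast Set.ncard_le_ncard Set.inter_subset_left (Set.toFinite _)
    · positivity

lemma utility_eq_zero_of_empty (H : SimpleGraph V) (τ : V → Bool) (v : V)
    (h : H.neighborSet v = ∅) : utility H τ v = 0 := by
  unfold utility
  rw [if_pos h]

lemma utility_eq_zero_of_ne (H : SimpleGraph V) (τ : V → Bool) (v : V)
    (h : ∀ u, H.Adj v u → τ u ≠ τ v) : utility H τ v = 0 := by
  unfold utility
  split
  · rfl
  · have he : H.neighborSet v ∩ {w | τ w = τ v} = ∅ := by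
      ext u
      simp only [Set.mem_inter_iff, SimpleGraph.mem_neighborSet, Set.mem_setOf_eq,
        Set.mem_empty_iff_false, iff_false, not_and]
      exact fun hu => h u hu
    rw [he]
    simp

lemma utility_eq_one [Fintype V] (H : SimpleGraph V) (τ : V → Bool) (v : V)
    (hne : H.neighborSet v ≠ ∅) (h : ∀ u, H.Adj v u → τ u = τ v) : utility H τ v = 1 := by
  unfold utility
  rw [if_neg hne]
  have he : H.neighborSet v ∩ {w | τ w = τ v} = H.neighborSet v := by
    ext u
    simp only [Set.mem_inter_iff, SimpleGraph.mem_neighborSet, Set.mem_setOf_eq,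
      and_iff_left_iff_imp]
    exact fun hu => h u hu
  rw [he, div_self]
  have : 0 < (H.neighborSet v).ncard :=
    (Set.ncard_pos (Set.toFinite _)).mpr (Set.nonempty_iff_ne_empty.mpr hne)
  exact_mod_cast this.ne'

lemma swapAt_left (τ : V → Bool) (i j : V) : swapAt τ i j i = τ j := by
  unfold swapAt; simp

lemma swapAt_right (τ : V → Bool) {i j : V} (h : j ≠ i) : swapAt τ i j j = τ i := by
  unfold swapAt; simp [h]

lemma swapAt_other (τ : V → Bool) {i j v : V} (h1 : v ≠ i) (h2 : v ≠ j) :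
    swapAt τ i j v = τ v := by
  unfold swapAt; simp [h1, h2]

lemma profitableSwap_symm {H : SimpleGraph V} {τ : V → Bool} {i j : V}
    (h : ProfitableSwap H τ i j) : ProfitableSwap H τ j i := by
  obtain ⟨hne, h1, h2⟩ := h
  have hij : i ≠ j := fun hh => hne (hh ▸ rfl)
  have hswap : swapAt τ j i = swapAt τ i j := by
    funext v
    by_cases h1' : v = i
    · subst h1'
      exact (swapAt_right τ hij).trans (swapAt_left τ _ _).symm
    · by_cases h2' : v = j
      · subst h2'
        exact (swapAt_left τ _ _).trans (swapAt_right τ (Ne.symm hij)).symm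
      · rw [swapAt_other τ h2' h1', swapAt_other τ h1' h2']
  exact ⟨hne.symm, by rw [hswap]; exact h2, by rw [hswap]; exact h1⟩

lemma walk_closed {G : SimpleGraph V} {s : Set V}
    (hs : ∀ a b, G.Adj a b → a ∈ s → b ∈ s) :
    ∀ {x z : V}, G.Walk x z → x ∈ s → z ∈ s := by
  intro x z p
  induction p with
  | nil => exact id
  | cons h' p ih => exact fun hx => ih (hs _ _ h' hx)

lemma key_no_swap [Fintype V] (G : SimpleGraph V) (ℓ : ℕ) (w : Fin ℓ → V)
    (hconn : G.Connected)
    (hspine : ∀ v : V, v ∈ Set.range w ↔ 1 < ndeg G v)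
    (hpath : ∀ i j : Fin ℓ, G.Adj (w i) (w j) ↔
      ((i : ℕ) + 1 = (j : ℕ) ∨ (j : ℕ) + 1 = (i : ℕ)))
    (τ : V → Bool)
    (hc1 : ∀ i j : Fin ℓ, i ≤ j → τ (w j) = true → τ (w i) = true)
    (hc2 : ∀ v : V, ndeg G v = 1 → ∀ i : Fin ℓ, G.Adj v (w i) →
      τ v = true → τ (w i) = true)
    (hc3 : ∀ i j : Fin ℓ, i < j → τ (w j) = true →
      ∀ v : V, ndeg G v = 1 → G.Adj v (w i) → τ v = true)
    (H : SimpleGraph V) (hH : H ≤ G)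
    (i j : V) (hti : τ i = true) (htj : τ j = false) :
    ¬ ProfitableSwap H τ i j := by
  rintro ⟨hne, hi, hj⟩
  have hij : i ≠ j := fun h => hne (h ▸ rfl)
  -- unique neighbor of a non-spine vertex
  have hdeg1 : ∀ v : V, v ∉ Set.range w → ∀ u : V, G.Adj v u → G.neighborSet v = {u} := by
    intro v hv u hadj
    have h1 : ¬ (1 < ndeg G v) := fun h => hv ((hspine v).mpr h)
    have hmem : u ∈ G.neighborSet v := hadj
    have h2 : 0 < (G.neighborSet v).ncard :=
      (Set.ncard_pos (Set.toFinite _)).mpr ⟨u, hmem⟩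
    have h3 : (G.neighborSet v).ncard = 1 := by
      unfold ndeg at h1; omega
    obtain ⟨a, ha⟩ := Set.ncard_eq_one.mp h3
    rw [ha] at hmem
    rw [Set.mem_singleton_iff] at hmem
    rw [ha, hmem]
  -- Step A : i has an H-neighbor of the opposite type
  have hA : ∃ x, H.Adj i x ∧ τ x = false := by
    by_contra hA
    push_neg at hA
    by_cases hemp : H.neighborSet i = ∅
    · have h0 : utility H (swapAt τ i j) i = 0 := utility_eq_zero_of_empty _ _ _ hemp
      rw [h0] at hj
      exact absurd hj (not_lt.mpr (utility_nonneg _ _ _))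
    · have h1 : utility H τ i = 1 := by
        refine utility_eq_one _ _ _ hemp (fun u hu => ?_)
        rw [hti]
        exact eq_true_of_ne_false (hA u hu)
      rw [h1] at hi
      exact absurd hi (not_lt.mpr (utility_le_one _ _ _))
  -- main claim: any true H-neighbor of j is i
  have claim : ∀ u, H.Adj j u → τ u = true → u = i := by
    obtain ⟨x, hxadj, hxf⟩ := hA
    have hGix : G.Adj i x := hH hxadj
    by_cases hirange : i ∈ Set.range w
    · obtain ⟨k, hk⟩ := hirange
      -- k is the last true spine index
      have hkmax : ∀ t : Fin ℓ, τ (w t) = true → (t : ℕ) ≤ (k : ℕ) := by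
        intro t ht
        by_contra hkt
        push_neg at hkt
        by_cases hxr : x ∈ Set.range w
        · obtain ⟨s, hs⟩ := hxr
          have hadj' : G.Adj (w k) (w s) := by rw [hk, hs]; exact hGix
          rcases (hpath k s).mp hadj' with hcase | hcase
          · have hst : s ≤ t := Fin.le_def.mpr (by omega)
            have h' := hc1 s t hst ht
            rw [hs] at h'; rw [h'] at hxf; cases hxf
          · have hsk : s ≤ k := Fin.le_def.mpr (by omega)
            have h' := hc1 s k hsk (by rw [hk]; exact hti)
            rw [hs] at h'; rw [h'] at hxf; cases hxf
        · have hdx : G.neighborSet x = {i} := hdeg1 x hxr i hGix.symm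
          have hnd : ndeg G x = 1 := by unfold ndeg; rw [hdx]; simp
          have hklt : k < t := Fin.lt_def.mpr hkt
          have h' := hc3 k t hklt ht x hnd (by rw [hk]; exact hGix.symm)
          rw [h'] at hxf; cases hxf
      intro u huadj hut
      have hGju : G.Adj j u := hH huadj
      by_cases hjr : j ∈ Set.range w
      · obtain ⟨t, htj'⟩ := hjr
        have htwt : τ (w t) = false := by rw [htj']; exact htj
        have hkt : (k : ℕ) < (t : ℕ) := by
          by_contra hle
          push_neg at hle
          have h' := hc1 t k (Fin.le_def.mpr hle) (by rw [hk]; exact hti)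
          rw [h'] at htwt; cases htwt
        by_cases hur : u ∈ Set.range w
        · obtain ⟨s, hsu⟩ := hur
          have hadj' : G.Adj (w t) (w s) := by rw [htj', hsu]; exact hGju
          have hsle : (s : ℕ) ≤ (k : ℕ) := hkmax s (by rw [hsu]; exact hut)
          rcases (hpath t s).mp hadj' with hcase | hcase
          · exfalso; omega
          · have hsk : s = k := Fin.ext (by omega)
            rw [← hsu, hsk]; exact hk
        · have hdu : G.neighborSet u = {j} := hdeg1 u hur j hGju.symm
          have hnd : ndeg G u = 1 := by unfold ndeg; rw [hdu]; simp
          have h' := hc2 u hnd t (by rw [htj']; exact hGju.symm) hut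
          rw [h'] at htwt; cases htwt
      · have hdj : G.neighborSet j = {u} := hdeg1 j hjr u hGju
        have hndj : ndeg G j = 1 := by unfold ndeg; rw [hdj]; simp
        by_cases hur : u ∈ Set.range w
        · obtain ⟨s, hsu⟩ := hur
          have hsle : (s : ℕ) ≤ (k : ℕ) := hkmax s (by rw [hsu]; exact hut)
          rcases lt_or_eq_of_le hsle with hlt | heq
          · have h' := hc3 s k (Fin.lt_def.mpr hlt) (by rw [hk]; exact hti) j hndj
              (by rw [hsu]; exact hGju)
            rw [h'] at htj; cases htj
          · have hsk : s = k := Fin.ext heq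
            rw [← hsu, hsk]; exact hk
        · -- component {j, u} is closed under adjacency
          have hdu : G.neighborSet u = {j} := hdeg1 u hur j hGju.symm
          have hclosed : ∀ a b : V, G.Adj a b → a ∈ ({j, u} : Set V) →
              b ∈ ({j, u} : Set V) := by
            intro a b hab ha
            simp only [Set.mem_insert_iff, Set.mem_singleton_iff] at ha ⊢
            rcases ha with ha | ha
            · subst ha
              have hb : b ∈ G.neighborSet a := hab
              rw [hdj, Set.mem_singleton_iff] at hb
              right; exact hb
            · subst ha
              have hb : b ∈ G.neighborSet a := hab
              rw [hdu, Set.mem_singleton_iff] at hb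
              left; exact hb
          obtain ⟨p⟩ := hconn.preconnected j i
          have hin : i ∈ ({j, u} : Set V) := walk_closed hclosed p (by left; rfl)
          simp only [Set.mem_insert_iff, Set.mem_singleton_iff] at hin
          rcases hin with h' | h'
          · exact absurd h' hij
          · exact h'.symm
    · -- degenerate case: i is a leaf with a false leaf-neighbor
      have hdi : G.neighborSet i = {x} := hdeg1 i hirange x hGix
      have hndi : ndeg G i = 1 := by unfold ndeg; rw [hdi]; simp
      by_cases hxr : x ∈ Set.range w
      · obtain ⟨s, hs⟩ := hxr
        have h' := hc2 i hndi s (by rw [hs]; exact hGix) hti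
        rw [hs] at h'; rw [h'] at hxf; cases hxf
      · have hdx : G.neighborSet x = {i} := hdeg1 x hxr i hGix.symm
        have hclosed : ∀ a b : V, G.Adj a b → a ∈ ({i, x} : Set V) →
            b ∈ ({i, x} : Set V) := by
          intro a b hab ha
          simp only [Set.mem_insert_iff, Set.mem_singleton_iff] at ha ⊢
          rcases ha with ha | ha
          · subst ha
            have hb : b ∈ G.neighborSet a := hab
            rw [hdi, Set.mem_singleton_iff] at hb
            right; exact hb
          · subst ha
            have hb : b ∈ G.neighborSet a := hab
            rw [hdx, Set.mem_singleton_iff] at hb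
            left; exact hb
        obtain ⟨p⟩ := hconn.preconnected i j
        have hin : j ∈ ({i, x} : Set V) := walk_closed hclosed p (by left; rfl)
        simp only [Set.mem_insert_iff, Set.mem_singleton_iff] at hin
        rcases hin with h' | h'
        · exact absurd h'.symm hij
        · -- j = x, so all G-neighbors of j are i
          subst h'
          intro u huadj _
          have hu : u ∈ G.neighborSet j := hH huadj
          rw [hdx, Set.mem_singleton_iff] at hu
          exact hu
  -- after the swap, the true agent now at j has no same-type neighbor
  have hσj0 : utility H (swapAt τ i j) j = 0 := by
    refine utility_eq_zero_of_ne _ _ _ (fun u hu => ?_)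
    rw [swapAt_right τ (Ne.symm hij), hti]
    by_cases hui : u = i
    · subst hui
      rw [swapAt_left, htj]
      exact Bool.false_ne_true
    · have huj : u ≠ j := fun h => (H.ne_of_adj hu) h.symm
      rw [swapAt_other τ hui huj]
      intro h'
      exact hui (claim u hu h')
  rw [hσj0] at hi
  exact absurd hi (not_lt.mpr (utility_nonneg _ _ _))

/-- Let `G` be an `α`-caterpillar whose vertices of degree `> 1` form a path
`w 0, …, w (ℓ-1)`. The assignment obtained by filling the stars in order with the agents
of `T1` (type `true`) — first the central vertex, then its degree-one neighbors — until
`T1` is exhausted, and placing the agents of `T2` (type `false`) on all remaining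
vertices, is a swap-equilibrium, and it remains one after deleting any subset of edges.
The filling order is captured by the conditions `hc1`–`hc3`. -/
theorem caterpillar_greedy_fill_fully_edge_robust [Fintype V] (G : SimpleGraph V)
    (α ℓ : ℕ) (w : Fin ℓ → V)
    (hconn : G.Connected)
    (hinj : Function.Injective w)
    (hspine : ∀ v : V, v ∈ Set.range w ↔ 1 < ndeg G v)
    (hpath : ∀ i j : Fin ℓ, G.Adj (w i) (w j) ↔
      ((i : ℕ) + 1 = (j : ℕ) ∨ (j : ℕ) + 1 = (i : ℕ)))
    (halpha : ∀ v : V, 1 < ndeg G v →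
      {u ∈ G.neighborSet v | 1 < ndeg G u}.ncard + α ≤
        {u ∈ G.neighborSet v | ndeg G u = 1}.ncard)
    (τ : V → Bool)
    (hc1 : ∀ i j : Fin ℓ, i ≤ j → τ (w j) = true → τ (w i) = true)
    (hc2 : ∀ v : V, ndeg G v = 1 → ∀ i : Fin ℓ, G.Adj v (w i) →
      τ v = true → τ (w i) = true)
    (hc3 : ∀ i j : Fin ℓ, i < j → τ (w j) = true →
      ∀ v : V, ndeg G v = 1 → G.Adj v (w i) → τ v = true) :
    ∀ S : Set (Sym2 V), IsSwapEq (G.deleteEdges S) τ := by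
  intro S i j hps
  have hH : G.deleteEdges S ≤ G := SimpleGraph.deleteEdges_le S
  by_cases hti : τ i = true
  · have htj : τ j = false := by
      rcases Bool.eq_false_or_eq_true (τ j) with h | h
      · exact absurd (hti.trans h.symm) hps.1
      · exact h
    exact key_no_swap G ℓ w hconn hspine hpath τ hc1 hc2 hc3 _ hH i j hti htj hps
  · have hti' : τ i = false := Bool.eq_false_iff.mpr hti
    have htj : τ j = true := by
      rcases Bool.eq_false_or_eq_true (τ j) with h | h
      · exact h
      · exact absurd (hti'.trans h.symm) hps.1
    exact key_no_swap G ℓ w hconn hspine hpath τ hc1 hc2 hc3 _ hH j i htj hti'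
      (profitableSwap_symm hps)
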